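/- Let X be a Sturmian subshift over {0,1}, i.e. a subshift with word complexity p_n(X) = n + 1 for all n ≥ 1. Then for every fixed k ≥ 1, limsup_{n→∞} N_{σ,X}(2^{-(k-1)}, n) / n^χ equals ∞ for χ < 1, equals 1 for χ = 1, and equals 0 for χ > 1; consequently the topological slow entropy of X at polynomial scale a_χ(n) = n^χ equals 1. -/

import Mathlib

open Set Filter

/-- The left shift on bi-infinite sequences. -/
def shiftMap {A : Type*} : (ℤ → A) → (ℤ → A) := fun ω n => ω (n + 1)

open Classical in
/-- The standard metric on the full shift `A^ℤ`. -/
noncomputable def shiftDist {A : Type*} (ω η : ℤ → A) : ℝ :=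
  if ω = η then 0
  else (2 : ℝ) ^ (-((sInf {i : ℕ | ω (i : ℤ) ≠ η (i : ℤ) ∨ ω (-(i : ℤ)) ≠ η (-(i : ℤ))} : ℕ) : ℤ))

/-- The `(ε,n)`-Bowen ball (inside the subshift `X`) of the shift centered at `ω`. -/
def seqBowenBall {A : Type*} (X : Set (ℤ → A)) (n : ℕ) (ε : ℝ) (ω : ℤ → A) : Set (ℤ → A) :=
  {η ∈ X | ∀ i < n, shiftDist (shiftMap^[i] ω) (shiftMap^[i] η) < ε}

/-- `N_{σ,X}(ε,n)`: minimal number of `(ε,n)`-Bowen balls (centers in `X`) covering `X`. -/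
noncomputable def coverNum {A : Type*} (X : Set (ℤ → A)) (ε : ℝ) (n : ℕ) : ℕ :=
  sInf {m : ℕ | ∃ F : Finset (ℤ → A), ↑F ⊆ X ∧ F.card = m ∧
    X ⊆ ⋃ ω ∈ F, seqBowenBall X n ε ω}

/-- `p_m(X)`: the number of words of length `m` in the language of `X`. -/
noncomputable def wordCount {A : Type*} (X : Set (ℤ → A)) (m : ℕ) : ℕ :=
  Nat.card {w : Fin m → A | ∃ ω ∈ X, ∀ i : Fin m, ω ((i : ℕ) : ℤ) = w i}


lemma shiftMap_iterate {A : Type*} (ω : ℤ → A) (i : ℕ) (n : ℤ) :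
    (shiftMap^[i] ω) n = ω (n + i) := by
  induction i generalizing n with
  | zero => simp
  | succ j ih =>
    rw [Function.iterate_succ_apply', shiftMap, ih]
    congr 1; push_cast; ring

lemma diffset_nonempty {A : Type*} {ω η : ℤ → A} (h : ω ≠ η) :
    {i : ℕ | ω (i : ℤ) ≠ η (i : ℤ) ∨ ω (-(i : ℤ)) ≠ η (-(i : ℤ))}.Nonempty := by
  obtain ⟨m, hm⟩ := Function.ne_iff.1 h
  rcases le_or_gt 0 m with h0 | h0
  · exact ⟨m.toNat, Or.inl (by rwa [Int.toNat_of_nonneg h0])⟩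
  · refine ⟨(-m).toNat, Or.inr ?_⟩
    rw [Int.toNat_of_nonneg (by omega), neg_neg]; exact hm

lemma shiftDist_lt_iff {A : Type*} (ω η : ℤ → A) (k : ℕ) (hk : 1 ≤ k) :
    shiftDist ω η < (2 : ℝ) ^ (-((k : ℤ) - 1)) ↔
      ∀ j : ℕ, j < k → ω (j : ℤ) = η (j : ℤ) ∧ ω (-(j : ℤ)) = η (-(j : ℤ)) := by
  classical
  unfold shiftDist
  by_cases h : ω = η
  · simp only [if_pos h]
    constructor
    · intro _ j _; exact ⟨by rw [h], by rw [h]⟩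
    · intro _; positivity
  · simp only [if_neg h]
    set S := {i : ℕ | ω (i : ℤ) ≠ η (i : ℤ) ∨ ω (-(i : ℤ)) ≠ η (-(i : ℤ))} with hS
    constructor
    · intro hlt j hj
      have hmono : -((sInf S : ℕ) : ℤ) < -((k : ℤ) - 1) := by
        exact_mod_cast (zpow_lt_zpow_iff_right₀ (by norm_num : (1:ℝ) < 2)).1 hlt
      have hk' : k ≤ sInf S := by omega
      have : j ∉ S := Nat.notMem_of_lt_sInf (lt_of_lt_of_le hj hk')
      rw [hS, Set.mem_setOf_eq] at this
      push_neg at this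
      exact this
    · intro hagree
      have hne := diffset_nonempty h
      have hklei : k ≤ sInf S := by
        by_contra hc
        push_neg at hc
        have hmem := Nat.sInf_mem hne
        have := hagree (sInf S) hc
        simp only [Set.mem_setOf_eq] at hmem
        tauto
      have : -((sInf S : ℕ) : ℤ) < -((k : ℤ) - 1) := by omega
      exact (zpow_lt_zpow_iff_right₀ (by norm_num : (1:ℝ) < 2)).2 (by exact_mod_cast this)

section
variable {A : Type*} {X : Set (ℤ → A)} (hinv : shiftMap '' X = X)
include hinv

lemma mem_shift_one (ω : ℤ → A) : ω ∈ X ↔ shiftMap ω ∈ X := by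
  constructor
  · intro hω; rw [← hinv]; exact ⟨ω, hω, rfl⟩
  · intro hω
    rw [← hinv] at hω
    obtain ⟨η, hη, hrw⟩ := hω
    have : η = ω := by
      funext n
      have := congrFun hrw (n - 1)
      simpa [shiftMap] using this
    rwa [← this]

lemma mem_shift_int (ω : ℤ → A) (a : ℤ) : ω ∈ X ↔ (fun n => ω (n + a)) ∈ X := by
  induction a using Int.induction_on with
  | zero => simp
  | succ b ih =>
    rw [ih, mem_shift_one hinv (fun n => ω (n + b))]
    have : (shiftMap fun n => ω (n + b)) = fun n => ω (n + ((b : ℤ) + 1)) := by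
      funext n; simp only [shiftMap]; congr 1; ring
    rw [this]
  | pred b ih =>
    rw [ih]
    have h2 := mem_shift_one hinv (fun n => ω (n + (-(b : ℤ) - 1)))
    have : (shiftMap fun n => ω (n + (-(b : ℤ) - 1))) = fun n => ω (n + -(b : ℤ)) := by
      funext n; simp only [shiftMap]; congr 1; ring
    rw [this] at h2
    rw [h2]

lemma window_eq (m : ℕ) (a : ℤ) :
    {w : Fin m → A | ∃ ω ∈ X, ∀ i : Fin m, ω ((i : ℕ) + a) = w i} =
    {w : Fin m → A | ∃ ω ∈ X, ∀ i : Fin m, ω ((i : ℕ) : ℤ) = w i} := by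
  ext w
  simp only [Set.mem_setOf_eq]
  constructor
  · rintro ⟨ω, hω, hw⟩
    exact ⟨fun n => ω (n + a), (mem_shift_int hinv ω a).1 hω, fun i => hw i⟩
  · rintro ⟨ω, hω, hw⟩
    refine ⟨fun n => ω (n + (-a)), (mem_shift_int hinv ω (-a)).1 hω, fun i => ?_⟩
    simpa using hw i

end

lemma cover_upper {X : Set (ℤ → Fin 2)} (hinv : shiftMap '' X = X)
    (hsturm : ∀ m : ℕ, 1 ≤ m → wordCount X m = m + 1)
    (ε : ℝ) (k n : ℕ) (hk : 1 ≤ k) (hε : (2:ℝ) ^ (-((k:ℤ)-1)) ≤ ε) :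
    ∃ m : ℕ, (m ∈ {m : ℕ | ∃ F : Finset (ℤ → Fin 2), ↑F ⊆ X ∧ F.card = m ∧
      X ⊆ ⋃ ω ∈ F, seqBowenBall X n ε ω}) ∧ m ≤ n + 2*k := by
  classical
  set M := n + 2*k - 1 with hM
  have hM1 : 1 ≤ M := by omega
  set a : ℤ := -((k:ℤ) - 1) with ha
  set S : Set (Fin M → Fin 2) := {w | ∃ ω ∈ X, ∀ i : Fin M, ω ((i:ℕ) + a) = w i} with hSdef
  have hScard : Nat.card S = M + 1 := by
    have h1 : S = {w : Fin M → Fin 2 | ∃ ω ∈ X, ∀ i : Fin M, ω ((i:ℕ) : ℤ) = w i} :=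
      window_eq hinv M a
    have h2 := hsturm M hM1
    unfold wordCount at h2
    rw [hSdef, window_eq hinv M a]; exact h2
  set g : (Fin M → Fin 2) → (ℤ → Fin 2) :=
    fun w => if h : w ∈ S then h.choose else (fun _ => 0) with hg
  have hg1 : ∀ w, w ∈ S → g w ∈ X ∧ ∀ i : Fin M, (g w) ((i:ℕ) + a) = w i := by
    intro w h
    simp only [hg, dif_pos h]
    exact ⟨h.choose_spec.1, h.choose_spec.2⟩
  set F : Finset (ℤ → Fin 2) := (S.toFinite.toFinset).image g with hF
  refine ⟨F.card, ⟨F, ?_, rfl, ?_⟩, ?_⟩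
  · intro x hx
    simp only [hF, Finset.coe_image, Set.mem_image, Set.Finite.coe_toFinset] at hx
    obtain ⟨w, hw, rfl⟩ := hx
    exact (hg1 w hw).1
  · intro η hη
    set w : Fin M → Fin 2 := fun i => η ((i:ℕ) + a) with hwdef
    have hwS : w ∈ S := ⟨η, hη, fun i => rfl⟩
    set c := g w with hc
    have hcF : c ∈ F := by
      simp only [hF, Finset.mem_image, Set.Finite.mem_toFinset]
      exact ⟨w, hwS, rfl⟩
    have hagree : ∀ t : ℤ, a ≤ t → t < a + M → c t = η t := by
      intro t h1 h2
      have hMZ : (M : ℤ) = (n:ℤ) + 2*(k:ℤ) - 1 := by omega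
      have htn : ((t - a).toNat : ℤ) = t - a := Int.toNat_of_nonneg (by omega)
      have hlt : (t - a).toNat < M := by omega
      have e1 := (hg1 w hwS).2 ⟨(t - a).toNat, hlt⟩
      have e2 : w ⟨(t - a).toNat, hlt⟩ = η (((t - a).toNat : ℤ) + a) := rfl
      rw [e2] at e1
      rw [htn] at e1
      simpa using e1
    refine Set.mem_iUnion₂.2 ⟨c, hcF, hη, ?_⟩
    intro i hi
    refine lt_of_lt_of_le ?_ hε
    rw [shiftDist_lt_iff _ _ k hk]
    intro j hj
    have hMZ : (M : ℤ) = (n:ℤ) + 2*(k:ℤ) - 1 := by omega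
    constructor
    · rw [shiftMap_iterate, shiftMap_iterate]
      exact hagree ((j:ℤ) + i) (by omega) (by omega)
    · rw [shiftMap_iterate, shiftMap_iterate]
      exact hagree (-(j:ℤ) + i) (by omega) (by omega)
  · calc F.card ≤ (S.toFinite.toFinset).card := Finset.card_image_le
      _ = Nat.card S := (Nat.card_eq_card_finite_toFinset S.toFinite).symm
      _ = M + 1 := hScard
      _ ≤ n + 2*k := by omega

lemma cover_lower {X : Set (ℤ → Fin 2)} (hinv : shiftMap '' X = X)
    (hsturm : ∀ m : ℕ, 1 ≤ m → wordCount X m = m + 1)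
    (ε : ℝ) (n : ℕ) (hn : 1 ≤ n) (hε0 : 0 < ε) (hε1 : ε ≤ 1) :
    n + 1 ≤ coverNum X ε n := by
  classical
  obtain ⟨j, hj⟩ := exists_pow_lt_of_lt_one hε0 (by norm_num : (1:ℝ)/2 < 1)
  have hpow : (2:ℝ) ^ (-(((j+1:ℕ):ℤ) - 1)) = (1/2 : ℝ) ^ j := by
    push_cast
    rw [show (-((j:ℤ) + 1 - 1)) = -(j:ℤ) by ring]
    rw [zpow_neg, ← zpow_natCast]
    simp [one_div, inv_pow]
  obtain ⟨m, hm, _⟩ := cover_upper hinv hsturm ε (j+1) n (by omega) (le_of_lt (hpow ▸ hj))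
  have hne : {m : ℕ | ∃ F : Finset (ℤ → Fin 2), ↑F ⊆ X ∧ F.card = m ∧
      X ⊆ ⋃ ω ∈ F, seqBowenBall X n ε ω}.Nonempty := ⟨m, hm⟩
  have hmem := Nat.sInf_mem hne
  obtain ⟨F, hFX, hFcard, hcover⟩ := hmem
  set W : Set (Fin n → Fin 2) := {w | ∃ ω ∈ X, ∀ i : Fin n, ω ((i:ℕ) : ℤ) = w i} with hW
  have hWcard : Nat.card W = n + 1 := by
    have := hsturm n hn; unfold wordCount at this; exact this
  have hub : ∀ (ω : ℤ → Fin 2), ω ∈ X → ∃ c ∈ F, ω ∈ seqBowenBall X n ε c := by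
    intro ω hω
    have := hcover hω
    simpa using Set.mem_iUnion₂.1 this
  set f : W → {x // x ∈ F} := fun w =>
    ⟨(hub w.2.choose w.2.choose_spec.1).choose,
     (hub w.2.choose w.2.choose_spec.1).choose_spec.1⟩ with hf
  have hkey : ∀ (w : W) (i : Fin n), ((f w : ℤ → Fin 2)) ((i:ℕ):ℤ) = (w : Fin n → Fin 2) i := by
    rintro w i
    have hωX := w.2.choose_spec.1
    have hωw := w.2.choose_spec.2
    have hball := (hub w.2.choose hωX).choose_spec.2
    have hd := hball.2 i i.2
    have hlt : shiftDist (shiftMap^[(i:ℕ)] (f w : ℤ → Fin 2)) (shiftMap^[(i:ℕ)] w.2.choose)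
        < (2:ℝ) ^ (-((1:ℤ) - 1)) := by
      refine lt_of_lt_of_le hd ?_
      simpa using hε1
    have h0 := ((shiftDist_lt_iff _ _ 1 le_rfl).1 hlt 0 one_pos).1
    rw [shiftMap_iterate, shiftMap_iterate] at h0
    simp only [Nat.cast_zero, zero_add] at h0
    exact h0.trans (hωw i)
  have hfinj : Function.Injective f := by
    rintro w1 w2 heq
    apply Subtype.ext
    funext i
    have e1 := hkey w1 i
    have e2 := hkey w2 i
    rw [heq] at e1
    rw [← e1, ← e2]
  have hle : Nat.card W ≤ Nat.card {x // x ∈ F} := Nat.card_le_card_of_injective f hfinj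
  rw [hWcard, Nat.card_eq_finsetCard] at hle
  unfold coverNum
  omega

lemma aux_div_tendsto (c : ℝ) :
    Tendsto (fun n : ℕ => ((n:ℝ) + c) / (n:ℝ)) atTop (nhds 1) := by
  have h : Tendsto (fun n : ℕ => 1 + c * (1/(n:ℝ))) atTop (nhds 1) := by
    have := tendsto_const_nhds (x := (1:ℝ)) (f := atTop (α := ℕ)) |>.add
      ((tendsto_one_div_atTop_nhds_zero_nat.const_mul c))
    simpa using this
  refine h.congr' ?_
  filter_upwards [eventually_ge_atTop 1] with n hn
  have hn0 : (n:ℝ) ≠ 0 := by positivity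
  field_simp

lemma aux_tendsto_top (u : ℕ → ℕ) (h : ∀ᶠ n in atTop, n + 1 ≤ u n) {χ : ℝ} (hχ : χ < 1) :
    Tendsto (fun n : ℕ => ((u n : ℝ) / (n:ℝ) ^ χ)) atTop atTop := by
  have h1 : Tendsto (fun n : ℕ => ((n:ℝ) ^ (1 - χ))) atTop atTop :=
    (tendsto_rpow_atTop (by linarith)).comp tendsto_natCast_atTop_atTop
  refine tendsto_atTop_mono' atTop ?_ h1
  filter_upwards [h, eventually_ge_atTop 1] with n hu hn
  have hn0 : (0:ℝ) < (n:ℝ) := by exact_mod_cast Nat.lt_of_lt_of_le Nat.zero_lt_one hn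
  have hpow : (0:ℝ) < (n:ℝ) ^ χ := Real.rpow_pos_of_pos hn0 χ
  rw [Real.rpow_sub hn0, Real.rpow_one]
  gcongr
  have : (n:ℝ) ≤ (u n : ℝ) := by exact_mod_cast Nat.le_of_succ_le hu
  linarith

lemma aux_tendsto_one (u : ℕ → ℕ) (C : ℕ)
    (h : ∀ᶠ n in atTop, n + 1 ≤ u n ∧ u n ≤ n + C) :
    Tendsto (fun n : ℕ => ((u n : ℝ) / (n:ℝ))) atTop (nhds 1) := by
  refine tendsto_of_tendsto_of_tendsto_of_le_of_le' (aux_div_tendsto 1) (aux_div_tendsto C)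
    ?_ ?_
  · filter_upwards [h, eventually_ge_atTop 1] with n hu hn
    have hn0 : (0:ℝ) < (n:ℝ) := by exact_mod_cast Nat.lt_of_lt_of_le Nat.zero_lt_one hn
    gcongr
    exact_mod_cast hu.1
  · filter_upwards [h, eventually_ge_atTop 1] with n hu hn
    have hn0 : (0:ℝ) < (n:ℝ) := by exact_mod_cast Nat.lt_of_lt_of_le Nat.zero_lt_one hn
    gcongr
    exact_mod_cast hu.2

lemma aux_tendsto_zero (u : ℕ → ℕ) (C : ℕ) (h : ∀ᶠ n in atTop, u n ≤ n + C)
    {χ : ℝ} (hχ : 1 < χ) :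
    Tendsto (fun n : ℕ => ((u n : ℝ) / (n:ℝ) ^ χ)) atTop (nhds 0) := by
  have h1 : Tendsto (fun n : ℕ => (n:ℝ) ^ (1 - χ) + C * (n:ℝ) ^ (-χ)) atTop (nhds 0) := by
    have a1 : Tendsto (fun n : ℕ => (n:ℝ) ^ (1 - χ)) atTop (nhds 0) := by
      have := (tendsto_rpow_neg_atTop (by linarith : (0:ℝ) < χ - 1)).comp
        tendsto_natCast_atTop_atTop
      simpa [Function.comp_def, show -(χ - 1) = 1 - χ by ring] using this
    have a2 : Tendsto (fun n : ℕ => (C:ℝ) * (n:ℝ) ^ (-χ)) atTop (nhds 0) := by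
      have := ((tendsto_rpow_neg_atTop (by linarith : (0:ℝ) < χ)).comp
        tendsto_natCast_atTop_atTop).const_mul (C:ℝ)
      simpa using this
    simpa using a1.add a2
  refine tendsto_of_tendsto_of_tendsto_of_le_of_le' tendsto_const_nhds h1 ?_ ?_
  · filter_upwards [eventually_ge_atTop 1] with n hn
    have hn0 : (0:ℝ) < (n:ℝ) := by exact_mod_cast Nat.lt_of_lt_of_le Nat.zero_lt_one hn
    positivity
  · filter_upwards [h, eventually_ge_atTop 1] with n hu hn
    have hn0 : (0:ℝ) < (n:ℝ) := by exact_mod_cast Nat.lt_of_lt_of_le Nat.zero_lt_one hn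
    have hpow : (0:ℝ) < (n:ℝ) ^ χ := Real.rpow_pos_of_pos hn0 χ
    have e : (n:ℝ) ^ (1 - χ) + C * (n:ℝ) ^ (-χ) = ((n:ℝ) + C) / (n:ℝ) ^ χ := by
      rw [Real.rpow_sub hn0, Real.rpow_one, Real.rpow_neg hn0.le]
      field_simp
    rw [e]
    gcongr
    exact_mod_cast hu

lemma ereal_limsup_top {f : ℕ → ℝ} (h : Tendsto f atTop atTop) :
    limsup (fun n => ((f n : ℝ) : EReal)) atTop = ⊤ := by
  have : Tendsto (fun n => ((f n : ℝ) : EReal)) atTop (nhds ⊤) := by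
    rw [EReal.tendsto_nhds_top_iff_real]
    intro x; filter_upwards [h.eventually_gt_atTop x] with n hn; exact_mod_cast hn
  exact this.limsup_eq

lemma ereal_limsup_coe {f : ℕ → ℝ} {c : ℝ} (h : Tendsto f atTop (nhds c)) :
    limsup (fun n => ((f n : ℝ) : EReal)) atTop = (c : EReal) :=
  (EReal.tendsto_coe.2 h).limsup_eq

lemma exists_scale (ε : ℝ) (hε0 : 0 < ε) :
    ∃ k : ℕ, 1 ≤ k ∧ (2:ℝ) ^ (-((k:ℤ) - 1)) ≤ ε := by
  obtain ⟨j, hj⟩ := exists_pow_lt_of_lt_one hε0 (by norm_num : (1:ℝ)/2 < 1)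
  refine ⟨j + 1, by omega, ?_⟩
  have hpow : (2:ℝ) ^ (-(((j+1:ℕ):ℤ) - 1)) = (1/2 : ℝ) ^ j := by
    push_cast
    rw [show (-((j:ℤ) + 1 - 1)) = -(j:ℤ) by ring]
    rw [zpow_neg, ← zpow_natCast]
    simp [one_div, inv_pow]
  rw [hpow]
  exact hj.le

/-- For a Sturmian subshift `X` (word complexity `p_m(X) = m + 1`), for every `k ≥ 1` the
quantity `limsup N_{σ,X}(2^{-(k-1)}, n) / n^χ` is `∞` for `χ < 1`, is `1` for `χ = 1`, and
is `0` for `χ > 1`; consequently the topological slow entropy at polynomial scale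
`a_χ(n) = n^χ` equals `1`. -/
theorem sturmian_top_slow_entropy
    (X : Set (ℤ → Fin 2)) (hX : IsClosed X) (hinv : shiftMap '' X = X)
    (hsturm : ∀ m : ℕ, 1 ≤ m → wordCount X m = m + 1) :
    (∀ k : ℕ, 1 ≤ k →
      (∀ χ : ℝ, χ < 1 →
        limsup (fun n : ℕ =>
          (((coverNum X ((2 : ℝ) ^ (-((k : ℤ) - 1))) n : ℝ) / (n : ℝ) ^ χ : ℝ) : EReal))
          atTop = ⊤) ∧
      limsup (fun n : ℕ =>
          (((coverNum X ((2 : ℝ) ^ (-((k : ℤ) - 1))) n : ℝ) / (n : ℝ) : ℝ) : EReal))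
          atTop = 1 ∧
      (∀ χ : ℝ, 1 < χ →
        limsup (fun n : ℕ =>
          (((coverNum X ((2 : ℝ) ^ (-((k : ℤ) - 1))) n : ℝ) / (n : ℝ) ^ χ : ℝ) : EReal))
          atTop = 0)) ∧
    Tendsto (fun ε : ℝ =>
        sSup {χ : ℝ | 0 ≤ χ ∧ 0 < limsup (fun n : ℕ =>
          (((coverNum X ε n : ℝ) / (n : ℝ) ^ χ : ℝ) : EReal)) atTop})
      (nhdsWithin 0 (Ioi 0)) (nhds 1) := by
  have main : ∀ ε : ℝ, 0 < ε → ε ≤ 1 →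
      (∀ χ : ℝ, χ < 1 →
        limsup (fun n : ℕ => (((coverNum X ε n : ℝ) / (n : ℝ) ^ χ : ℝ) : EReal)) atTop = ⊤) ∧
      limsup (fun n : ℕ => (((coverNum X ε n : ℝ) / (n : ℝ) : ℝ) : EReal)) atTop = 1 ∧
      (∀ χ : ℝ, 1 < χ →
        limsup (fun n : ℕ => (((coverNum X ε n : ℝ) / (n : ℝ) ^ χ : ℝ) : EReal)) atTop = 0) := by
    intro ε hε0 hε1
    obtain ⟨k, hk, hkε⟩ := exists_scale ε hε0
    have hbounds : ∀ᶠ n in atTop, n + 1 ≤ coverNum X ε n ∧ coverNum X ε n ≤ n + 2*k := by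
      filter_upwards [eventually_ge_atTop 1] with n hn
      refine ⟨cover_lower hinv hsturm ε n hn hε0 hε1, ?_⟩
      obtain ⟨m, hm, hle⟩ := cover_upper hinv hsturm ε k n hk hkε
      exact le_trans (Nat.sInf_le hm) hle
    refine ⟨?_, ?_, ?_⟩
    · intro χ hχ
      exact ereal_limsup_top (aux_tendsto_top _ (hbounds.mono fun n h => h.1) hχ)
    · have := ereal_limsup_coe (aux_tendsto_one _ (2*k) hbounds)
      rw [this]; norm_num
    · intro χ hχ
      have := ereal_limsup_coe (aux_tendsto_zero _ (2*k) (hbounds.mono fun n h => h.2) hχ)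
      rw [this]; norm_num
  constructor
  · intro k hk
    have hε0 : (0:ℝ) < (2:ℝ) ^ (-((k:ℤ) - 1)) := by positivity
    have hε1 : (2:ℝ) ^ (-((k:ℤ) - 1)) ≤ 1 :=
      zpow_le_one_of_nonpos₀ (by norm_num) (by omega)
    exact main _ hε0 hε1
  · have hev : ∀ᶠ ε in nhdsWithin (0:ℝ) (Ioi 0),
        sSup {χ : ℝ | 0 ≤ χ ∧ 0 < limsup (fun n : ℕ =>
          (((coverNum X ε n : ℝ) / (n : ℝ) ^ χ : ℝ) : EReal)) atTop} = 1 := by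
      filter_upwards [self_mem_nhdsWithin,
        eventually_nhdsWithin_of_eventually_nhds (Iic_mem_nhds (by norm_num : (0:ℝ) < 1))]
        with ε hε0 hε1
      have h3 := main ε hε0 hε1
      have hset : {χ : ℝ | 0 ≤ χ ∧ 0 < limsup (fun n : ℕ =>
          (((coverNum X ε n : ℝ) / (n : ℝ) ^ χ : ℝ) : EReal)) atTop} = Icc (0:ℝ) 1 := by
        ext χ
        simp only [Set.mem_setOf_eq, Set.mem_Icc]
        constructor
        · rintro ⟨hχ0, hχl⟩
          refine ⟨hχ0, ?_⟩
          by_contra hgt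
          push_neg at hgt
          rw [h3.2.2 χ hgt] at hχl
          exact lt_irrefl _ hχl
        · rintro ⟨hχ0, hχ1⟩
          refine ⟨hχ0, ?_⟩
          rcases lt_or_eq_of_le hχ1 with h | h
          · rw [h3.1 χ h]
            exact EReal.zero_lt_top
          · subst h
            have heq : (fun n : ℕ => (((coverNum X ε n : ℝ) / (n : ℝ) ^ (1:ℝ) : ℝ) : EReal))
                = fun n : ℕ => (((coverNum X ε n : ℝ) / (n : ℝ) : ℝ) : EReal) := by
              funext n; rw [Real.rpow_one]
            rw [heq, h3.2.1]
            norm_num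
      rw [hset]
      exact csSup_Icc zero_le_one
    exact Tendsto.congr' (hev.mono fun ε h => h.symm) tendsto_const_nhds
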